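/- The quotient space X(Δ) = U(Σ)/Ker λ associated to a complete non-singular topological fan Δ is compact. -/

import Mathlib

noncomputable section

open Complex Finset

/-- `g^μ` for `μ = (b + c·i, v) ∈ ℂ × ℤ`: `|g|^(b+ci) · (g/|g|)^v`. -/
noncomputable def cpw (b c : ℝ) (v : ℤ) (g : ℂ) : ℂ :=
  ((‖g‖ : ℂ) ^ ((b : ℂ) + (c : ℂ) * Complex.I)) * (g / (‖g‖ : ℂ)) ^ v

/-- `g^μ` where `μ` is encoded as a triple `(b, c, v) : ℝ × ℝ × ℤ`. -/
noncomputable def cpwT (t : ℝ × ℝ × ℤ) (g : ℂ) : ℂ := cpw t.1 t.2.1 t.2.2 g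

/-- The product `μ₂μ₁ = (b₁b₂, b₁c₂ + c₁v₂, v₁v₂)` in the ring `𝓡 ≅ ℂ × ℤ`. -/
def rmul (μ₂ μ₁ : ℝ × ℝ × ℤ) : ℝ × ℝ × ℤ :=
  (μ₁.1 * μ₂.1, μ₁.1 * μ₂.2.1 + μ₁.2.1 * (μ₂.2.2 : ℝ), μ₁.2.2 * μ₂.2.2)

/-- The identity element of `𝓡`. -/
def rone : ℝ × ℝ × ℤ := (1, 0, 1)

/-- `⟨α, β⟩ = Σₖ αᵏ βᵏ ∈ 𝓡`. -/
def rinner {n : ℕ} (α β : Fin n → ℝ × ℝ × ℤ) : ℝ × ℝ × ℤ :=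
  ∑ k, rmul (α k) (β k)

/-- `χ^α(g₁, …, gₙ) = ∏ₖ gₖ^{αᵏ}`. -/
noncomputable def chi {n : ℕ} (α : Fin n → ℝ × ℝ × ℤ) (g : Fin n → ℂ) : ℂ :=
  ∏ k, cpwT (α k) (g k)

/-- The cone spanned by the vectors `b i`, `i ∈ I`. -/
def coneOf {n : ℕ} (m : ℕ) (b : Fin m → (Fin n → ℝ)) (I : Finset (Fin m)) :
    Set (Fin n → ℝ) :=
  {x | ∃ r : Fin m → ℝ, (∀ i, 0 ≤ r i) ∧ (∀ i ∉ I, r i = 0) ∧ x = ∑ i, r i • b i}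

/-- A complete non-singular (simplicial) topological fan of dimension `n` on the vertex set
`[m]`: an abstract simplicial complex `cx` on `Fin m` together with
`β : Fin m → 𝓡ⁿ = ℂⁿ × ℤⁿ`, `β i = (bᵢ + i·cᵢ, vᵢ)` (encoded componentwise by triples in
`ℝ × ℝ × ℤ`), such that the cones `∠b_I`, `I ∈ cx`, form a complete ordinary simplicial fan
and each `{vᵢ}_{i ∈ I}` is part of a `ℤ`-basis of `ℤⁿ` (rows of a unimodular matrix). -/
structure CompleteNonsingularTopFan (n m : ℕ) where
  cx : Finset (Finset (Fin m))
  β : Fin m → Fin n → ℝ × ℝ × ℤ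
  down_closed : ∀ I ∈ cx, ∀ J ⊆ I, J ∈ cx
  vertices : ∀ i : Fin m, {i} ∈ cx
  indep : ∀ I ∈ cx, LinearIndependent ℝ (fun i : I => fun k => (β i k).1)
  cone_inter : ∀ I ∈ cx, ∀ J ∈ cx,
    coneOf m (fun i k => (β i k).1) I ∩ coneOf m (fun i k => (β i k).1) J =
      coneOf m (fun i k => (β i k).1) (I ∩ J)
  complete : (⋃ I ∈ cx, coneOf m (fun i k => (β i k).1) I) = Set.univ
  nonsingular : ∀ I ∈ cx, ∃ (C : Matrix (Fin n) (Fin n) ℤ) (ρ : Fin m → Fin n),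
    IsUnit C.det ∧ Set.InjOn ρ (I : Set (Fin m)) ∧ ∀ i ∈ I, ∀ k, C (ρ i) k = (β i k).2.2

/-- The homomorphism `λ : (ℂ*)ᵐ → (ℂ*)ⁿ`, `λ(h₁,…,hₘ) = ∏ₖ λ_{βₖ}(hₖ)`, written on
`j`-th coordinates: `λ(h)ⱼ = ∏ₖ hₖ^{βₖʲ}`. -/
noncomputable def lamMap {n m : ℕ} (β : Fin m → Fin n → ℝ × ℝ × ℤ) (h : Fin m → ℂ) :
    Fin n → ℂ :=
  fun j => ∏ k, cpwT (β k j) (h k)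

/-- `U(Σ) = ⋃_{I ∈ Σ} U(I) ⊆ ℂᵐ`. -/
def USigma {n m : ℕ} (Δ : CompleteNonsingularTopFan n m) : Set (Fin m → ℂ) :=
  ⋃ I ∈ Δ.cx, {z : Fin m → ℂ | ∀ k ∉ I, z k ≠ 0}

/-- The relation on `U(Σ)` identifying points in the same `Ker λ`-orbit; the quotient
`Quot (orbitRel Δ)` is the space `X(Δ) = U(Σ)/Ker λ` with the quotient topology. -/
def orbitRel {n m : ℕ} (Δ : CompleteNonsingularTopFan n m)
    (z w : USigma Δ) : Prop :=
  ∃ h : Fin m → ℂ, (∀ k, h k ≠ 0) ∧ (lamMap Δ.β h = fun _ => 1) ∧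
    ∀ k, (w : Fin m → ℂ) k = h k * (z : Fin m → ℂ) k

namespace XDeltaAux

variable {n m : ℕ}

/-- The `b`-vectors of a topological fan. -/
abbrev bvec (Δ : CompleteNonsingularTopFan n m) : Fin m → Fin n → ℝ :=
  fun i k => (Δ.β i k).1

/-- The linear map `(I → ℝ) → ℝⁿ`, `r ↦ ∑ r i • b i`. -/
def coneMap (b : Fin m → Fin n → ℝ) (I : Finset (Fin m)) : (I → ℝ) →ₗ[ℝ] (Fin n → ℝ) where
  toFun r := ∑ i : I, r i • b i
  map_add' r s := by simp [add_smul, Finset.sum_add_distrib]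
  map_smul' c r := by simp [Finset.smul_sum, smul_smul]

lemma sum_eq_sum_subtype (b : Fin m → Fin n → ℝ) (I : Finset (Fin m)) (r : Fin m → ℝ)
    (hr : ∀ i ∉ I, r i = 0) : ∑ i, r i • b i = ∑ i : I, r (i : Fin m) • b i := by
  rw [Finset.sum_coe_sort I (fun i => r i • b i)]
  symm
  apply Finset.sum_subset (Finset.subset_univ I)
  intro x _ hx
  simp [hr x hx]

lemma coneOf_eq_image (b : Fin m → Fin n → ℝ) (I : Finset (Fin m)) :
    coneOf m b I = coneMap b I '' {r | ∀ i, 0 ≤ r i} := by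
  classical
  ext x
  constructor
  · rintro ⟨r, hr0, hrI, rfl⟩
    exact ⟨fun i => r i, fun i => hr0 i, (sum_eq_sum_subtype b I r hrI).symm⟩
  · rintro ⟨r, hr0, rfl⟩
    refine ⟨fun i => if h : i ∈ I then r ⟨i, h⟩ else 0, ?_, ?_, ?_⟩
    · intro i
      by_cases h : i ∈ I
      · simpa [h] using hr0 ⟨i, h⟩
      · simp [h]
    · intro i hi; simp [hi]
    · rw [sum_eq_sum_subtype b I _ (by intro i hi; simp [hi])]
      simp only [coneMap, LinearMap.coe_mk, AddHom.coe_mk]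
      apply Finset.sum_congr rfl
      intro i _
      simp [i.2]

lemma coneOf_isClosed (b : Fin m → Fin n → ℝ) (I : Finset (Fin m))
    (hb : LinearIndependent ℝ (fun i : I => b i)) : IsClosed (coneOf m b I) := by
  rw [coneOf_eq_image]
  have hker : LinearMap.ker (coneMap b I) = ⊥ := by
    rw [LinearMap.ker_eq_bot']
    intro r hr
    have := (Fintype.linearIndependent_iff.mp hb) r hr
    funext i; exact this i
  have hce := LinearMap.isClosedEmbedding_of_injective (𝕜 := ℝ) hker
  have hclosed : IsClosed {r : I → ℝ | ∀ i, 0 ≤ r i} := by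
    have : {r : I → ℝ | ∀ i, 0 ≤ r i} = ⋂ i, {r : I → ℝ | 0 ≤ r i} := by
      ext r; simp [Set.mem_iInter]
    rw [this]
    exact isClosed_iInter fun i => isClosed_le continuous_const (continuous_apply i)
  exact hce.isClosedMap _ hclosed

lemma coneOf_smul_mem (b : Fin m → Fin n → ℝ) (I : Finset (Fin m)) {x : Fin n → ℝ} {t : ℝ}
    (hx : x ∈ coneOf m b I) (ht : 0 ≤ t) : t • x ∈ coneOf m b I := by
  obtain ⟨r, hr0, hrI, rfl⟩ := hx
  refine ⟨fun i => t * r i, fun i => mul_nonneg ht (hr0 i), fun i hi => by simp [hrI i hi], ?_⟩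
  rw [Finset.smul_sum]
  apply Finset.sum_congr rfl
  intro i _
  rw [smul_smul]

lemma abs_exp_ofReal_add_mul_I (s θ : ℝ) :
    ‖Complex.exp ((s : ℂ) + (θ : ℂ) * Complex.I)‖ = Real.exp s := by
  rw [Complex.norm_exp]
  simp

lemma cpw_exp (b c : ℝ) (v : ℤ) (s θ : ℝ) :
    cpw b c v (Complex.exp ((s : ℂ) + (θ : ℂ) * Complex.I)) =
      Complex.exp (((s * b : ℝ) : ℂ) + ((s * c + v * θ : ℝ) : ℂ) * Complex.I) := by
  rw [cpw, abs_exp_ofReal_add_mul_I]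
  have h1 : ((Real.exp s : ℝ) : ℂ) ^ ((b : ℂ) + (c : ℂ) * Complex.I)
      = Complex.exp ((s : ℂ) * ((b : ℂ) + (c : ℂ) * Complex.I)) := by
    rw [Complex.cpow_def_of_ne_zero (by exact_mod_cast (Real.exp_pos s).ne')]
    rw [← Complex.ofReal_log (Real.exp_pos s).le, Real.log_exp]
  have h2 : Complex.exp ((s : ℂ) + (θ : ℂ) * Complex.I) / ((Real.exp s : ℝ) : ℂ)
      = Complex.exp ((θ : ℂ) * Complex.I) := by
    rw [Complex.ofReal_exp, ← Complex.exp_sub]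
    ring_nf
  rw [h1, h2, ← Complex.exp_int_mul, ← Complex.exp_add]
  congr 1
  push_cast
  ring

/-- If the coefficient sums vanish appropriately, `h = exp (s + θi)` is in `Ker λ`. -/
lemma lamMap_exp (Δ : CompleteNonsingularTopFan n m) (s θ : Fin m → ℝ)
    (hb : ∀ j, ∑ k, s k * (Δ.β k j).1 = 0)
    (hc : ∀ j, ∑ k, (s k * (Δ.β k j).2.1 + ((Δ.β k j).2.2 : ℝ) * θ k) = 0) :
    lamMap Δ.β (fun k => Complex.exp ((s k : ℂ) + (θ k : ℂ) * Complex.I)) = fun _ => 1 := by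
  funext j
  simp only [lamMap, cpwT]
  have : ∀ k : Fin m, cpw (Δ.β k j).1 (Δ.β k j).2.1 (Δ.β k j).2.2
      (Complex.exp ((s k : ℂ) + (θ k : ℂ) * Complex.I)) =
      Complex.exp (((s k * (Δ.β k j).1 : ℝ) : ℂ)
        + ((s k * (Δ.β k j).2.1 + ((Δ.β k j).2.2 : ℝ) * θ k : ℝ) : ℂ) * Complex.I) :=
    fun k => cpw_exp _ _ _ _ _
  rw [Finset.prod_congr rfl (fun k _ => this k), ← Complex.exp_sum]
  have hsum : ∑ k : Fin m, (((s k * (Δ.β k j).1 : ℝ) : ℂ)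
        + ((s k * (Δ.β k j).2.1 + ((Δ.β k j).2.2 : ℝ) * θ k : ℝ) : ℂ) * Complex.I)
      = ((∑ k, s k * (Δ.β k j).1 : ℝ) : ℂ)
        + ((∑ k, (s k * (Δ.β k j).2.1 + ((Δ.β k j).2.2 : ℝ) * θ k) : ℝ) : ℂ) * Complex.I := by
    rw [Finset.sum_add_distrib, ← Finset.sum_mul]
    push_cast
    ring
  rw [hsum, hb j, hc j]
  simp

end XDeltaAux
namespace XDeltaAux

variable {n m : ℕ}

/-- Solve `∑ₖ vₖⱼ θₖ = u j` with `θ` supported on an `n`-element simplex. -/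
lemma exists_theta (Δ : CompleteNonsingularTopFan n m) (Istar : Finset (Fin m))
    (hIcx : Istar ∈ Δ.cx) (hcard : Istar.card = n) (u : Fin n → ℝ) :
    ∃ θ : Fin m → ℝ, ∀ j, ∑ k, ((Δ.β k j).2.2 : ℝ) * θ k = u j := by
  classical
  obtain ⟨C, ρ, hdet, hinj, hCρ⟩ := Δ.nonsingular Istar hIcx
  set ρ' : Istar → Fin n := fun i => ρ i with hρ'
  have hinj' : Function.Injective ρ' := by
    intro a b hab
    exact Subtype.ext (hinj a.2 b.2 hab)
  have hbij : Function.Bijective ρ' := by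
    rw [Fintype.bijective_iff_injective_and_card]
    exact ⟨hinj', by rw [Fintype.card_coe, hcard, Fintype.card_fin]⟩
  set e := Equiv.ofBijective ρ' hbij with he
  set A : Matrix (Fin n) (Fin n) ℝ := (Int.castRingHom ℝ).mapMatrix C with hA
  have hdetA : IsUnit A.det := by
    rw [hA, ← RingHom.map_det]
    exact hdet.map (Int.castRingHom ℝ)
  set t : Fin n → ℝ := Matrix.vecMul u A⁻¹ with ht
  have htA : Matrix.vecMul t A = u := by
    rw [ht, Matrix.vecMul_vecMul, Matrix.nonsing_inv_mul A hdetA, Matrix.vecMul_one]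
  refine ⟨fun k => if h : k ∈ Istar then t (ρ k) else 0, ?_⟩
  intro j
  have hsplit : ∑ k, ((Δ.β k j).2.2 : ℝ) * (if h : k ∈ Istar then t (ρ k) else 0)
      = ∑ k ∈ Istar, ((Δ.β k j).2.2 : ℝ) * t (ρ k) := by
    rw [← Finset.sum_subset (Finset.subset_univ Istar)
      (f := fun k => ((Δ.β k j).2.2 : ℝ) * (if h : k ∈ Istar then t (ρ k) else 0))
      (fun x _ hx => by simp [hx])]
    apply Finset.sum_congr rfl
    intro k hk
    rw [dif_pos hk]
  rw [hsplit, ← Finset.sum_coe_sort Istar (fun k => ((Δ.β k j).2.2 : ℝ) * t (ρ k))]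
  have hterm : ∀ i : Istar, ((Δ.β (i : Fin m) j).2.2 : ℝ) * t (ρ (i : Fin m))
      = (fun p => A p j * t p) (e i) := by
    intro i
    have hC := hCρ (i : Fin m) i.2 j
    simp only [he, Equiv.ofBijective_apply, hρ', hA]
    rw [← hC]
    simp [Matrix.map_apply]
  rw [Finset.sum_congr rfl (fun i _ => hterm i), Equiv.sum_comp e (fun p => A p j * t p)]
  have : ∑ p, A p j * t p = Matrix.vecMul t A j := by
    rw [Matrix.vecMul]
    simp [dotProduct, mul_comm]
  rw [this, htA]

/-- There is a simplex of full dimension `n`. -/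
lemma exists_fulldim (Δ : CompleteNonsingularTopFan n m) :
    ∃ Istar ∈ Δ.cx, Istar.card = n := by
  classical
  set p : {J // J ∈ Δ.cx} → Subspace ℝ (Fin n → ℝ) :=
    fun I => Submodule.span ℝ (Set.range (fun i : I.1 => bvec Δ i)) with hp
  have hcover : ⋃ i, (p i : Set (Fin n → ℝ)) = Set.univ := by
    rw [Set.eq_univ_iff_forall]
    intro x
    have hx : x ∈ ⋃ I ∈ Δ.cx, coneOf m (fun i k => (Δ.β i k).1) I := by
      rw [Δ.complete]; trivial
    simp only [Set.mem_iUnion] at hx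
    obtain ⟨I, hI, r, hr0, hrI, rfl⟩ := hx
    refine Set.mem_iUnion.mpr ⟨⟨I, hI⟩, ?_⟩
    rw [sum_eq_sum_subtype _ I r hrI]
    exact Submodule.sum_mem _ fun i _ =>
      Submodule.smul_mem _ _ (Submodule.subset_span ⟨i, rfl⟩)
  obtain ⟨I, hItop⟩ := Subspace.exists_eq_top_of_iUnion_eq_univ hcover
  refine ⟨I.1, I.2, ?_⟩
  have hli : LinearIndependent ℝ (fun i : I.1 => bvec Δ i) := Δ.indep I.1 I.2
  have hbasis : Module.Basis I.1 ℝ (Fin n → ℝ) := Module.Basis.mk hli hItop.ge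
  have h1 := Module.finrank_eq_card_basis hbasis
  rw [Module.finrank_fintype_fun_eq_card, Fintype.card_fin, Fintype.card_coe] at h1
  omega

end XDeltaAux
namespace XDeltaAux

variable {n m : ℕ}

/-- Every `Ker λ`-orbit in `U(Σ)` meets one of the compact polydisk pieces. -/
lemma exists_good_rep (Δ : CompleteNonsingularTopFan n m) (z : Fin m → ℂ)
    (hz : z ∈ USigma Δ) :
    ∃ I ∈ Δ.cx, ∃ h : Fin m → ℂ, (∀ k, h k ≠ 0) ∧ (lamMap Δ.β h = fun _ => 1) ∧
      (∀ k, ‖h k * z k‖ ≤ 1) ∧ ∀ k ∉ I, ‖h k * z k‖ = 1 := by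
  classical
  obtain ⟨I₀, hI₀, hz0⟩ : ∃ I ∈ Δ.cx, ∀ k ∉ I, z k ≠ 0 := by
    simpa only [USigma, Set.mem_iUnion, Set.mem_setOf_eq, exists_prop] using hz
  -- the set of zero coordinates
  set S : Finset (Fin m) := Finset.univ.filter (fun k => z k = 0) with hS
  have hSmem : ∀ k, k ∈ S ↔ z k = 0 := fun k => by simp [hS]
  have hSsub : S ⊆ I₀ := by
    intro k hk
    by_contra hk'
    exact hz0 k hk' ((hSmem k).mp hk)
  have hScx : S ∈ Δ.cx := Δ.down_closed I₀ hI₀ S hSsub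
  set y : Fin m → ℝ := fun k => Real.log (‖z k‖) with hy
  set q : Fin n → ℝ := fun j => -∑ k, y k * bvec Δ k j with hq
  set σ : Fin n → ℝ := fun j => ∑ k ∈ S, bvec Δ k j with hσ
  have hσsum : σ = ∑ i, (if i ∈ S then (1:ℝ) else 0) • bvec Δ i := by
    funext j
    rw [hσ]
    simp only [Finset.sum_apply, Pi.smul_apply, smul_eq_mul, ite_mul, one_mul, zero_mul]
    rw [Finset.sum_ite_mem, Finset.univ_inter]
  have hσS : σ ∈ coneOf m (bvec Δ) S := by
    refine ⟨fun i => if i ∈ S then (1:ℝ) else 0, ?_, ?_, hσsum⟩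
    · intro i
      show (0:ℝ) ≤ if i ∈ S then (1:ℝ) else 0
      by_cases hi : i ∈ S <;> simp [hi]
    · intro i hi
      show (if i ∈ S then (1:ℝ) else 0) = 0
      simp [hi]
  -- choose cones containing q + M σ for every natural M
  have hcover : ∀ M : ℝ, ∃ I : {J // J ∈ Δ.cx}, q + M • σ ∈ coneOf m (bvec Δ) I.1 := by
    intro M
    have hx : q + M • σ ∈ Set.univ := trivial
    rw [← Δ.complete] at hx
    simp only [Set.mem_iUnion] at hx
    obtain ⟨I, hI, hmem⟩ := hx
    exact ⟨⟨I, hI⟩, hmem⟩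
  choose f hf using fun j : ℕ => hcover (j : ℝ)
  obtain ⟨Istar, hfib⟩ := Finite.exists_infinite_fiber f
  have hbig : ∀ N : ℕ, ∃ j : ℕ, N ≤ j ∧ f j = Istar := by
    intro N
    by_contra hcon
    push_neg at hcon
    have hsub : f ⁻¹' {Istar} ⊆ Set.Iio N := by
      intro j hj
      simp only [Set.mem_preimage, Set.mem_singleton_iff] at hj
      by_contra hlt
      exact hcon j (not_lt.mp (fun hh => hlt (Set.mem_Iio.mpr hh))) hj
    exact (Set.infinite_coe_iff.mp hfib) ((Set.finite_Iio N).subset hsub)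
  -- σ lies in the cone of Istar
  have hKcl : IsClosed (coneOf m (bvec Δ) Istar.1) :=
    coneOf_isClosed (bvec Δ) Istar.1 (Δ.indep Istar.1 Istar.2)
  have hσK : σ ∈ coneOf m (bvec Δ) Istar.1 := by
    rw [← hKcl.closure_eq, Metric.mem_closure_iff]
    intro ε hε
    obtain ⟨N, hN⟩ := exists_nat_gt (‖q‖ / ε)
    obtain ⟨j, hjN, hjf⟩ := hbig (N + 1)
    have hj1 : (1:ℝ) ≤ (j:ℝ) := by
      have : 1 ≤ j := le_trans (Nat.le_add_left 1 N) hjN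
      exact_mod_cast this
    have hj0 : (0:ℝ) < (j:ℝ) := lt_of_lt_of_le zero_lt_one hj1
    have hne : (j:ℝ) ≠ 0 := ne_of_gt hj0
    have hmem := hf j
    rw [hjf] at hmem
    refine ⟨(1/(j:ℝ)) • (q + (j:ℝ) • σ),
      coneOf_smul_mem _ _ hmem (by positivity), ?_⟩
    have heq : (1/(j:ℝ)) • (q + (j:ℝ) • σ) = (1/(j:ℝ)) • q + σ := by
      rw [smul_add, smul_smul, one_div_mul_cancel hne, one_smul]
    rw [heq, dist_eq_norm]
    have h3 : σ - ((1/(j:ℝ)) • q + σ) = -((1/(j:ℝ)) • q) := by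
      abel
    rw [h3, norm_neg, norm_smul, Real.norm_eq_abs, abs_of_pos (by positivity)]
    have hq' : ‖q‖ / ε < (j:ℝ) := by
      refine lt_of_lt_of_le hN ?_
      exact_mod_cast le_trans (Nat.le_succ N) hjN
    have hlt : ‖q‖ < ε * j := by
      rw [div_lt_iff₀ hε] at hq'
      linarith
    calc (1/(j:ℝ)) * ‖q‖ = ‖q‖ / (j:ℝ) := by ring
      _ < ε := by rw [div_lt_iff₀ hj0]; linarith
  -- S ⊆ Istar
  have hSI : S ⊆ Istar.1 := by
    have hint : σ ∈ coneOf m (fun i k => (Δ.β i k).1) Istar.1 ∩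
        coneOf m (fun i k => (Δ.β i k).1) S := ⟨hσK, hσS⟩
    rw [Δ.cone_inter Istar.1 Istar.2 S hScx] at hint
    obtain ⟨r', hr'0, hr'supp, hr'sum⟩ := hint
    set d : Fin m → ℝ := fun i => (if i ∈ S then (1:ℝ) else 0) - r' i with hd
    have hdsupp : ∀ i ∉ S, d i = 0 := by
      intro i hi
      have : i ∉ Istar.1 ∩ S := by
        rw [Finset.mem_inter]; tauto
      simp [hd, hi, hr'supp i this]
    have hd0 : ∑ i, d i • bvec Δ i = 0 := by
      simp only [hd, sub_smul, Finset.sum_sub_distrib]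
      rw [← hσsum, ← hr'sum]
      exact sub_self σ
    have hli := Fintype.linearIndependent_iff.mp (Δ.indep S hScx)
    have hdz : ∀ i : S, d (i : Fin m) = 0 := by
      apply hli (fun i : S => d i)
      rw [← sum_eq_sum_subtype (bvec Δ) S d hdsupp]
      exact hd0
    intro k hk
    by_contra hknot
    have h1 : d k = 0 := hdz ⟨k, hk⟩
    have h2 : r' k = 0 := hr'supp k (by rw [Finset.mem_inter]; tauto)
    rw [hd] at h1
    simp only [hk, if_pos, h2, sub_zero] at h1
    exact one_ne_zero h1
  -- pick a concrete representation of q + M₀ σ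
  obtain ⟨j₀, _, hjf₀⟩ := hbig 0
  have hp := hf j₀
  rw [hjf₀] at hp
  obtain ⟨r, hr0, hrI, hrsum⟩ := hp
  -- the additive part s
  set s : Fin m → ℝ := fun k => (if k ∈ S then ((j₀:ℕ):ℝ) else 0) - r k - y k with hs
  have hbj : ∀ j, ∑ k, s k * (Δ.β k j).1 = 0 := by
    intro j
    have h1 : ∑ k, s k * bvec Δ k j
        = ∑ k, (if k ∈ S then ((j₀:ℕ):ℝ) else 0) * bvec Δ k j
          - ∑ k, r k * bvec Δ k j - ∑ k, y k * bvec Δ k j := by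
      rw [← Finset.sum_sub_distrib, ← Finset.sum_sub_distrib]
      apply Finset.sum_congr rfl
      intro k _
      rw [hs]
      ring
    have h2 : ∑ k, (if k ∈ S then ((j₀:ℕ):ℝ) else 0) * bvec Δ k j
        = ((j₀:ℕ):ℝ) * σ j := by
      simp only [ite_mul, zero_mul]
      rw [Finset.sum_ite_mem, Finset.univ_inter, hσ, Finset.mul_sum]
    have h3 : ∑ k, r k * bvec Δ k j = q j + ((j₀:ℕ):ℝ) * σ j := by
      have := congrFun hrsum j
      simp only [Pi.add_apply, Pi.smul_apply, smul_eq_mul, Finset.sum_apply] at this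
      exact this.symm
    have h4 : q j = -∑ k, y k * bvec Δ k j := by rw [hq]
    rw [h1, h2, h3, h4]
    ring
  -- the angular part θ
  obtain ⟨Ifull, hIfull, hIfullcard⟩ := exists_fulldim Δ
  obtain ⟨θ, hθ⟩ := exists_theta Δ Ifull hIfull hIfullcard
    (fun j => -∑ k, s k * (Δ.β k j).2.1)
  have hcj : ∀ j, ∑ k, (s k * (Δ.β k j).2.1 + ((Δ.β k j).2.2 : ℝ) * θ k) = 0 := by
    intro j
    rw [Finset.sum_add_distrib, hθ j]
    ring
  refine ⟨Istar.1, Istar.2, fun k => Complex.exp ((s k : ℂ) + (θ k : ℂ) * Complex.I),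
    fun k => Complex.exp_ne_zero _, lamMap_exp Δ s θ hbj hcj, ?_, ?_⟩
  · intro k
    rw [norm_mul, abs_exp_ofReal_add_mul_I]
    by_cases hk : z k = 0
    · simp [hk]
    · have hpos : 0 < ‖z k‖ := by
        simpa [AbsoluteValue.pos_iff] using hk
      have hzk : ‖z k‖ = Real.exp (y k) := by
        rw [hy, Real.exp_log hpos]
      rw [hzk, ← Real.exp_add]
      rw [Real.exp_le_one_iff]
      have hknotS : k ∉ S := fun hkS => hk ((hSmem k).mp hkS)
      rw [hs]
      simp only [hknotS, if_neg, if_false]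
      have := hr0 k
      linarith
  · intro k hk
    have hknotS : k ∉ S := fun hkS => hk (hSI hkS)
    have hkz : z k ≠ 0 := fun hz => hknotS ((hSmem k).mpr hz)
    have hpos : 0 < ‖z k‖ := by
      simpa [AbsoluteValue.pos_iff] using hkz
    rw [norm_mul, abs_exp_ofReal_add_mul_I]
    have hzk : ‖z k‖ = Real.exp (y k) := by
      rw [hy, Real.exp_log hpos]
    rw [hzk, ← Real.exp_add]
    have hrk : r k = 0 := hrI k hk
    rw [hs]
    simp [hknotS, hrk]

end XDeltaAux
namespace XDeltaAux

variable {n m : ℕ}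

/-- The compact polydisk-like piece attached to a simplex `I`. -/
def polySet (m : ℕ) (I : Finset (Fin m)) : Set (Fin m → ℂ) :=
  {w | (∀ k, ‖w k‖ ≤ 1) ∧ ∀ k ∉ I, ‖w k‖ = 1}

lemma polySet_isCompact (I : Finset (Fin m)) : IsCompact (polySet m I) := by
  apply Metric.isCompact_of_isClosed_isBounded
  · have hrw : polySet m I = (⋂ k, {w : Fin m → ℂ | ‖w k‖ ≤ 1}) ∩
        ⋂ k, ⋂ (_ : k ∉ I), {w : Fin m → ℂ | ‖w k‖ = 1} := by
      ext w
      simp [polySet, Set.mem_iInter]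
    rw [hrw]
    apply IsClosed.inter
    · exact isClosed_iInter fun k =>
        isClosed_le (continuous_norm.comp (continuous_apply k)) continuous_const
    · exact isClosed_iInter fun k => isClosed_iInter fun _ =>
        isClosed_eq (continuous_norm.comp (continuous_apply k)) continuous_const
  · rw [isBounded_iff_forall_norm_le]
    refine ⟨1, fun w hw => ?_⟩
    rw [pi_norm_le_iff_of_nonneg zero_le_one]
    intro k
    exact hw.1 k

lemma polySet_subset_USigma (Δ : CompleteNonsingularTopFan n m) (I : Finset (Fin m))
    (hI : I ∈ Δ.cx) : polySet m I ⊆ USigma Δ := by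
  intro w hw
  refine Set.mem_iUnion.mpr ⟨I, Set.mem_iUnion.mpr ⟨hI, ?_⟩⟩
  intro k hk
  intro hzero
  have := hw.2 k hk
  rw [hzero] at this
  simp at this

end XDeltaAux


open XDeltaAux

/-- the quotient space `X(Δ) = U(Σ)/Ker λ` associated to a complete
non-singular topological fan `Δ` is compact. -/
theorem XDelta_compact (n m : ℕ) (Δ : CompleteNonsingularTopFan n m) :
    CompactSpace (Quot (orbitRel Δ)) := by
  classical
  constructor
  set K : Set (Fin m → ℂ) := ⋃ I ∈ Δ.cx, polySet m I with hK
  have hKcomp : IsCompact K := by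
    rw [hK]
    exact Δ.cx.finite_toSet.isCompact_biUnion fun I _ => polySet_isCompact I
  have hKsub : K ⊆ USigma Δ := by
    rw [hK]
    intro w hw
    simp only [Set.mem_iUnion] at hw
    obtain ⟨I, hI, hw⟩ := hw
    exact polySet_subset_USigma Δ I hI hw
  have hpre : IsCompact (Subtype.val ⁻¹' K : Set (USigma Δ)) := by
    rw [Topology.IsEmbedding.subtypeVal.isCompact_iff]
    have : Subtype.val '' (Subtype.val ⁻¹' K : Set (USigma Δ)) = K := by
      rw [Set.image_preimage_eq_inter_range, Subtype.range_coe]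
      exact Set.inter_eq_self_of_subset_left hKsub
    rw [this]
    exact hKcomp
  have himg : IsCompact (Quot.mk (orbitRel Δ) '' (Subtype.val ⁻¹' K)) :=
    hpre.image continuous_quot_mk
  have huniv : Quot.mk (orbitRel Δ) '' (Subtype.val ⁻¹' K) = Set.univ := by
    rw [Set.eq_univ_iff_forall]
    intro x
    induction x using Quot.ind with
    | _ zz =>
      obtain ⟨z, hzU⟩ := zz
      obtain ⟨I, hI, h, hne, hker, hle, heq⟩ := exists_good_rep Δ z hzU
      have hwP : (fun k => h k * z k) ∈ polySet m I := ⟨hle, heq⟩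
      have hwK : (fun k => h k * z k) ∈ K := by
        rw [hK]
        exact Set.mem_iUnion.mpr ⟨I, Set.mem_iUnion.mpr ⟨hI, hwP⟩⟩
      have hwU : (fun k => h k * z k) ∈ USigma Δ := hKsub hwK
      refine ⟨⟨(fun k => h k * z k), hwU⟩, hwK, ?_⟩
      exact (Quot.sound ⟨h, hne, hker, fun k => rfl⟩).symm
  rw [← huniv]
  exact himg
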